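/- Let h be a Lipschitz function on a metric space X and ν a Borel probability measure on X. Then limsup_{t→0⁺} (1/t) ∫ (h - Q_t h) dν ≤ (1/4) ∫ |∇⁻h|² dν. -/

import Mathlib

open Filter Set MeasureTheory Topology

/-- The descending slope `|∇⁻h|(x) = limsup_{y → x} [h(y)-h(x)]₋ / d(y,x)`
(equal to `0` at isolated points by the real limsup convention). -/
noncomputable def descSlope {X : Type*} [MetricSpace X] (h : X → ℝ) (x : X) : ℝ :=
  limsup (fun y => max (h x - h y) 0 / dist y x) (nhdsWithin x {x}ᶜ)

namespace DescSlopeAux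

variable {X : Type*} [MetricSpace X]

noncomputable def Qt (h : X → ℝ) (t : ℝ) (x : X) : ℝ := ⨅ y : X, h y + dist x y ^ 2 / t

noncomputable def slopeAux (h : X → ℝ) (r : ℝ) (x : X) : ℝ :=
  sSup ((fun y => max (h x - h y) 0 / dist y x) '' (Metric.ball x r \ {x}))

variable {h : X → ℝ} {L : NNReal}

lemma lip_sub (hL : LipschitzWith L h) (x y : X) : h x - h y ≤ L * dist x y := by
  have := hL.dist_le_mul x y
  rw [Real.dist_eq] at this
  exact le_of_abs_le this

lemma f_nonneg (x y : X) : 0 ≤ max (h x - h y) 0 / dist y x :=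
  div_nonneg (le_max_right _ _) dist_nonneg

lemma f_le (hL : LipschitzWith L h) (x : X) {y : X} (hy : y ≠ x) :
    max (h x - h y) 0 / dist y x ≤ L := by
  have hd : 0 < dist y x := dist_pos.2 hy
  rw [div_le_iff₀ hd]
  rcases max_cases (h x - h y) 0 with ⟨e, _⟩ | ⟨e, _⟩ <;> rw [e]
  · calc h x - h y ≤ L * dist x y := lip_sub hL x y
      _ = L * dist y x := by rw [dist_comm]
  · positivity

lemma slopeAux_nonneg (r : ℝ) (x : X) : 0 ≤ slopeAux h r x :=
  Real.sSup_nonneg (by rintro _ ⟨y, _, rfl⟩; exact f_nonneg x y)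

lemma slopeAux_le (hL : LipschitzWith L h) (r : ℝ) (x : X) : slopeAux h r x ≤ L :=
  Real.sSup_le (by rintro _ ⟨y, hy, rfl⟩; exact f_le hL x hy.2) L.coe_nonneg

lemma slopeAux_bddAbove (hL : LipschitzWith L h) (r : ℝ) (x : X) :
    BddAbove ((fun y => max (h x - h y) 0 / dist y x) '' (Metric.ball x r \ {x})) :=
  ⟨L, by rintro _ ⟨y, hy, rfl⟩; exact f_le hL x hy.2⟩

lemma descSlope_eq (hL : LipschitzWith L h) (x : X) :
    descSlope h x = ⨅ n : ℕ, slopeAux h (1 / (n + 1) : ℝ) x := by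
  have hbdd : BddBelow (range fun n : ℕ => slopeAux h (1 / (n + 1) : ℝ) x) :=
    ⟨0, by rintro _ ⟨n, rfl⟩; exact slopeAux_nonneg _ _⟩
  by_cases hne : (𝓝[{x}ᶜ] x).NeBot
  · apply le_antisymm
    · apply le_ciInf
      intro n
      apply limsup_le_of_le
      · exact isCoboundedUnder_le_of_le _ (fun y => f_nonneg x y)
      · have hr : (0:ℝ) < 1 / (n + 1) := by positivity
        have h1 : ∀ᶠ y in 𝓝[{x}ᶜ] x, y ∈ Metric.ball x (1 / (n + 1) : ℝ) :=
          mem_nhdsWithin_of_mem_nhds (Metric.ball_mem_nhds x hr)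
        have h2 : ∀ᶠ y in 𝓝[{x}ᶜ] x, y ∈ ({x}ᶜ : Set X) := eventually_mem_nhdsWithin
        filter_upwards [h1, h2] with y hy1 hy2
        exact le_csSup (slopeAux_bddAbove hL _ x) ⟨y, ⟨hy1, hy2⟩, rfl⟩
    · rw [descSlope, limsup_eq]
      apply le_csInf
      · refine ⟨L, ?_⟩
        filter_upwards [eventually_mem_nhdsWithin] with y hy
        exact f_le hL x hy
      · intro a ha
        simp only [mem_setOf_eq] at ha
        rw [Filter.eventually_iff, Metric.mem_nhdsWithin_iff] at ha
        obtain ⟨δ, hδ, hsub⟩ := ha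
        obtain ⟨n, hn⟩ := exists_nat_one_div_lt hδ
        refine le_trans (ciInf_le hbdd n) ?_
        apply csSup_le
        · have hx : x ∈ closure ({x}ᶜ : Set X) := mem_closure_iff_nhdsWithin_neBot.mpr hne
          rw [Metric.mem_closure_iff] at hx
          obtain ⟨y, hy1, hy2⟩ := hx ((1 : ℝ) / (n + 1)) (by positivity)
          exact ⟨_, ⟨y, ⟨by rwa [Metric.mem_ball, dist_comm], hy1⟩, rfl⟩⟩
        · rintro _ ⟨y, ⟨hy1, hy2⟩, rfl⟩
          exact hsub ⟨Metric.mem_ball.2 (lt_trans (Metric.mem_ball.1 hy1) hn), hy2⟩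
  · rw [not_neBot] at hne
    rw [descSlope, hne, limsup_eq]
    have huniv : {a : ℝ | ∀ᶠ y in (⊥ : Filter X), max (h x - h y) 0 / dist y x ≤ a} = univ := by
      ext a; simp [Filter.eventually_bot]
    rw [huniv, Real.sInf_of_not_bddBelow not_bddBelow_univ]
    apply le_antisymm
    · exact le_ciInf fun n => slopeAux_nonneg _ _
    · have hx : x ∉ closure ({x}ᶜ : Set X) := fun hx =>
        (mem_closure_iff_nhdsWithin_neBot.mp hx).ne hne
      rw [Metric.mem_closure_iff] at hx
      push_neg at hx
      obtain ⟨δ, hδ, hall⟩ := hx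
      obtain ⟨n, hn⟩ := exists_nat_one_div_lt hδ
      have hempty : Metric.ball x (1 / (n + 1) : ℝ) \ {x} = ∅ := by
        ext y
        simp only [mem_diff, Metric.mem_ball, mem_singleton_iff, mem_empty_iff_false,
          iff_false, not_and, not_not]
        intro hy
        by_contra hyx
        have h1 := hall y hyx
        rw [dist_comm] at h1
        linarith [lt_trans hy hn]
      refine le_trans (ciInf_le hbdd n) ?_
      rw [slopeAux, hempty, image_empty, Real.sSup_empty]


lemma descSlope_nonneg (hL : LipschitzWith L h) (x : X) : 0 ≤ descSlope h x := by
  rw [descSlope_eq hL]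
  exact le_ciInf fun n => slopeAux_nonneg _ _

lemma descSlope_le (hL : LipschitzWith L h) (x : X) : descSlope h x ≤ L := by
  rw [descSlope_eq hL]
  exact le_trans
    (ciInf_le ⟨0, by rintro _ ⟨n, rfl⟩; exact slopeAux_nonneg _ _⟩ 0) (slopeAux_le hL _ x)

lemma young {a d t : ℝ} (ht : 0 < t) : a * d ≤ d ^ 2 / t + a ^ 2 * t / 4 := by
  rw [← sub_nonneg]
  have he : d ^ 2 / t + a ^ 2 * t / 4 - a * d = (2 * d - a * t) ^ 2 / (4 * t) := by
    field_simp; ring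
  rw [he]; positivity

section Meas

variable [MeasurableSpace X] [OpensMeasurableSpace X]

lemma slopeAux_measurable (hL : LipschitzWith L h) (r : ℝ) :
    Measurable (slopeAux h r) := by
  apply measurable_of_Ioi
  intro a
  refine IsOpen.measurableSet ?_
  rw [isOpen_iff_forall_mem_open]
  intro x hx
  simp only [mem_preimage, mem_Ioi] at hx
  rcases lt_or_ge a 0 with ha | ha
  · exact ⟨univ, fun x' _ => lt_of_lt_of_le ha (slopeAux_nonneg r x'), isOpen_univ, mem_univ x⟩
  · have hne : ((fun y => max (h x - h y) 0 / dist y x) '' (Metric.ball x r \ {x})).Nonempty := by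
      by_contra hemp
      rw [not_nonempty_iff_eq_empty] at hemp
      rw [slopeAux, hemp, Real.sSup_empty] at hx
      exact absurd hx (not_lt.2 ha)
    obtain ⟨_, ⟨y, hy, rfl⟩, hgt⟩ := exists_lt_of_lt_csSup hne hx
    have hyx : y ≠ x := fun e => hy.2 (by simp [e])
    have hdyx : 0 < dist y x := dist_pos.2 hyx
    refine ⟨{x' | a * dist y x' < max (h x' - h y) 0} ∩ ({x' | 0 < dist y x'} ∩
      {x' | dist x' y < r}), ?_, ?_, ?_⟩
    · rintro x' ⟨hx1, hx2, hx3⟩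
      simp only [mem_preimage, mem_Ioi]
      have hyx' : y ≠ x' := fun e => by simp [e] at hx2
      have hlt : a < max (h x' - h y) 0 / dist y x' := (lt_div_iff₀ hx2).2 hx1
      refine lt_of_lt_of_le hlt (le_csSup (slopeAux_bddAbove hL r x') ?_)
      exact ⟨y, ⟨Metric.mem_ball.2 (by rwa [dist_comm]), fun e => hyx' (by simpa using e)⟩, rfl⟩
    · refine IsOpen.inter ?_ (IsOpen.inter ?_ ?_)
      · exact isOpen_lt (continuous_const.mul (continuous_const.dist continuous_id))
          ((hL.continuous.sub continuous_const).max continuous_const)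
      · exact isOpen_lt continuous_const (continuous_const.dist continuous_id)
      · exact isOpen_lt (continuous_id.dist continuous_const) continuous_const
    · refine ⟨(lt_div_iff₀ hdyx).1 hgt, hdyx, ?_⟩
      have := Metric.mem_ball.1 hy.1
      rwa [dist_comm] at this

lemma descSlope_measurable (hL : LipschitzWith L h) : Measurable (descSlope h) := by
  have he : descSlope h = fun x => ⨅ n : ℕ, slopeAux h (1 / (n + 1) : ℝ) x :=
    funext (descSlope_eq hL)
  rw [he]
  exact Measurable.iInf fun n => slopeAux_measurable hL _

end Meas

section QtLemmas

variable [Nonempty X]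

lemma qt_bddBelow (hL : LipschitzWith L h) (x : X) {t : ℝ} (ht : 0 < t) :
    BddBelow (range fun y : X => h y + dist x y ^ 2 / t) := by
  refine ⟨h x - (L : ℝ) ^ 2 * t / 4, ?_⟩
  rintro _ ⟨y, rfl⟩
  have h1 := lip_sub hL x y
  have h2 := young (a := (L : ℝ)) (d := dist x y) ht
  linarith

lemma qt_le_self (hL : LipschitzWith L h) (x : X) {t : ℝ} (ht : 0 < t) : Qt h t x ≤ h x := by
  have := ciInf_le (qt_bddBelow hL x ht) x
  simpa [Qt, dist_self] using this

lemma le_qt (hL : LipschitzWith L h) (x : X) {t : ℝ} (ht : 0 < t) :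
    h x - (L : ℝ) ^ 2 * t / 4 ≤ Qt h t x := by
  apply le_ciInf
  intro y
  have h1 := lip_sub hL x y
  have h2 := young (a := (L : ℝ)) (d := dist x y) ht
  linarith

lemma qt_measurable [MeasurableSpace X] [OpensMeasurableSpace X] (hL : LipschitzWith L h)
    {t : ℝ} (ht : 0 < t) : Measurable (Qt h t) := by
  apply measurable_of_Iio
  intro a
  have he : Qt h t ⁻¹' Iio a = ⋃ y, {x | h y + dist x y ^ 2 / t < a} := by
    ext x
    simp only [mem_preimage, mem_Iio, mem_iUnion, mem_setOf_eq]
    constructor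
    · exact fun hx => exists_lt_of_ciInf_lt hx
    · rintro ⟨y, hy⟩
      exact lt_of_le_of_lt (ciInf_le (qt_bddBelow hL x ht) y) hy
  rw [he]
  refine IsOpen.measurableSet (isOpen_iUnion fun y => ?_)
  exact isOpen_lt (continuous_const.add
    (((continuous_id.dist continuous_const).pow 2).div_const t)) continuous_const

lemma eventually_key (hL : LipschitzWith L h) (x : X) {ε : ℝ} (hε : 0 < ε) :
    ∀ᶠ t in nhdsWithin (0:ℝ) (Ioi 0),
      (h x - Qt h t x) / t ≤ (descSlope h x + ε) ^ 2 / 4 := by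
  set S := descSlope h x with hSdef
  have hS0 : 0 ≤ S := descSlope_nonneg hL x
  have hfleL : ∀ y, max (h x - h y) 0 / dist y x ≤ (L : ℝ) := by
    intro y
    by_cases hy : y = x
    · subst hy
      simp [dist_self]
    · exact f_le hL x hy
  have hlt : limsup (fun y => max (h x - h y) 0 / dist y x) (nhdsWithin x {x}ᶜ) < S + ε :=
    lt_add_of_pos_right S hε
  have hev := eventually_lt_of_limsup_lt hlt (isBoundedUnder_of ⟨(L : ℝ), hfleL⟩)
  rw [Filter.eventually_iff, Metric.mem_nhdsWithin_iff] at hev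
  obtain ⟨δ, hδ, hsub⟩ := hev
  have hLpos : (0:ℝ) < (L : ℝ) + 1 := by positivity
  have hmem : Ioo (0:ℝ) (δ / ((L : ℝ) + 1)) ∈ nhdsWithin (0:ℝ) (Ioi 0) :=
    Ioo_mem_nhdsGT (by positivity)
  filter_upwards [hmem] with t htmem
  obtain ⟨ht0, htδ⟩ := htmem
  have ht1 : t * ((L : ℝ) + 1) < δ := by
    rw [lt_div_iff₀ hLpos] at htδ
    exact htδ
  rw [div_le_iff₀ ht0]
  have h0 : (0:ℝ) ≤ (S + ε) ^ 2 / 4 * t := by positivity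
  have hq : h x - (S + ε) ^ 2 / 4 * t ≤ Qt h t x := by
    apply le_ciInf
    intro y
    rw [dist_comm x y]
    by_cases hy : y = x
    · subst hy
      simp only [dist_self]
      norm_num
      linarith
    · have hd : 0 < dist y x := dist_pos.2 hy
      rcases lt_or_ge (dist y x) δ with hcase | hcase
      · have hfy : max (h x - h y) 0 / dist y x < S + ε :=
          hsub ⟨Metric.mem_ball.2 hcase, hy⟩
        have h1 : h x - h y ≤ (S + ε) * dist y x := by
          have h2 := (div_lt_iff₀ hd).1 hfy
          calc h x - h y ≤ max (h x - h y) 0 := le_max_left _ _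
            _ ≤ (S + ε) * dist y x := h2.le
        have h2 := young (a := S + ε) (d := dist y x) ht0
        linarith
      · have h1 : h x - h y ≤ (L : ℝ) * dist y x := by
          rw [dist_comm]; exact lip_sub hL x y
        have h3 : t * ((L : ℝ) + 1) < dist y x := lt_of_lt_of_le ht1 hcase
        have h4 : (L : ℝ) * dist y x ≤ dist y x ^ 2 / t := by
          rw [le_div_iff₀ ht0]
          nlinarith [mul_le_mul_of_nonneg_left h3.le hd.le, mul_nonneg ht0.le hd.le]
        linarith
  linarith

end QtLemmas

end DescSlopeAux

open DescSlopeAux in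
/-- For Lipschitz `h` and a Borel probability measure `ν`,
`limsup_{t→0⁺} (1/t) ∫ (h - Q_t h) dν ≤ (1/4) ∫ |∇⁻h|² dν`. -/
theorem limsup_integral_infConv_le {X : Type*} [MetricSpace X] [MeasurableSpace X]
    [OpensMeasurableSpace X] (h : X → ℝ) (L : NNReal) (hL : LipschitzWith L h)
    (ν : Measure X) [IsProbabilityMeasure ν] :
    limsup (fun t : ℝ => (1 / t) * ∫ x, (h x - ⨅ y : X, h y + dist x y ^ 2 / t) ∂ν)
        (nhdsWithin 0 (Ioi 0)) ≤ (1 / 4) * ∫ x, (descSlope h x) ^ 2 ∂ν := by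
  have hXne : Nonempty X := by
    by_contra hX
    rw [not_nonempty_iff] at hX
    have h1 : ν univ = 1 := measure_univ
    rw [Set.univ_eq_empty_iff.mpr hX, measure_empty] at h1
    exact zero_ne_one h1
  set G : ℝ → ℝ := fun t => (1 / t) * ∫ x, (h x - Qt h t x) ∂ν with hGdef
  show limsup G (nhdsWithin 0 (Ioi 0)) ≤ (1 / 4) * ∫ x, (descSlope h x) ^ 2 ∂ν
  set C : ℝ := (1 / 4) * ∫ x, (descSlope h x) ^ 2 ∂ν with hCdef
  have hC0 : 0 ≤ C := by
    apply mul_nonneg (by norm_num)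
    exact integral_nonneg fun x => sq_nonneg _
  -- it suffices to show `limsup ≤ C + ε` for every `ε > 0`
  by_contra hcontra
  push_neg at hcontra
  set ε : ℝ := limsup G (nhdsWithin 0 (Ioi 0)) - C with hεdef
  have hε : 0 < ε := sub_pos.2 hcontra
  suffices hsuff : limsup G (nhdsWithin 0 (Ioi 0)) ≤ C + ε / 2 by
    rw [hεdef] at hsuff; linarith
  -- coboundedness of `G`
  have hG_nonneg : ∀ᶠ t in nhdsWithin (0:ℝ) (Ioi 0), 0 ≤ G t := by
    filter_upwards [self_mem_nhdsWithin] with t ht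
    have ht0 : (0:ℝ) < t := ht
    exact mul_nonneg (by positivity)
      (integral_nonneg fun x => sub_nonneg.2 (qt_le_self hL x ht0))
  refine limsup_le_of_le (isCoboundedUnder_le_of_eventually_le _ hG_nonneg) ?_
  -- eventual bound, by contradiction
  by_contra hcon
  rw [Filter.not_eventually] at hcon
  have hfreq : ∃ᶠ t in nhdsWithin (0:ℝ) (Ioi 0), (¬ G t ≤ C + ε / 2) ∧ 0 < t :=
    hcon.and_eventually self_mem_nhdsWithin
  obtain ⟨u, hu_tend, hu⟩ := Filter.exists_seq_forall_of_frequently hfreq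
  have hu_pos : ∀ n, 0 < u n := fun n => (hu n).2
  have hu_gt : ∀ n, C + ε / 2 < G (u n) := fun n => not_le.1 (hu n).1
  set v : ℕ → X → ℝ := fun n x => (h x - Qt h (u n) x) / u n with hvdef
  have hv_meas : ∀ n, Measurable (v n) := fun n =>
    ((hL.continuous.measurable).sub (qt_measurable hL (hu_pos n))).div_const _
  have hv_nonneg : ∀ n x, 0 ≤ v n x := fun n x =>
    div_nonneg (sub_nonneg.2 (qt_le_self hL x (hu_pos n))) (hu_pos n).le
  have hv_le : ∀ n x, v n x ≤ (L : ℝ) ^ 2 / 4 := by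
    intro n x
    rw [div_le_iff₀ (hu_pos n)]
    have h1 := le_qt hL x (hu_pos n)
    linarith
  have hv_int : ∀ n, Integrable (v n) ν := fun n =>
    ⟨(hv_meas n).aestronglyMeasurable, HasFiniteIntegral.of_bounded (C := (L : ℝ) ^ 2 / 4)
      (ae_of_all _ fun x => by
        rw [Real.norm_eq_abs, abs_of_nonneg (hv_nonneg n x)]; exact hv_le n x)⟩
  set g : ℕ → X → ENNReal := fun n x => ENNReal.ofReal (v n x) with hgdef
  have h1 : ∀ n, ∫⁻ x, g n x ∂ν = ENNReal.ofReal (G (u n)) := by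
    intro n
    rw [← ofReal_integral_eq_lintegral_ofReal (hv_int n) (ae_of_all _ (hv_nonneg n))]
    congr 1
    rw [hGdef]
    simp only [hvdef]
    rw [integral_div]
    ring
  -- `ε'` small
  set ε' : ℝ := min 1 ((ε / 2) / (2 * (L : ℝ) + 2)) with hε'def
  have hε' : 0 < ε' := lt_min one_pos (by positivity)
  have hε'1 : ε' ≤ 1 := min_le_left _ _
  have hε'2 : ε' * (2 * (L : ℝ) + 2) ≤ ε / 2 := by
    have := min_le_right (1:ℝ) ((ε / 2) / (2 * (L : ℝ) + 2))
    rw [hε'def]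
    calc min 1 ((ε / 2) / (2 * (L : ℝ) + 2)) * (2 * (L : ℝ) + 2)
        ≤ ((ε / 2) / (2 * (L : ℝ) + 2)) * (2 * (L : ℝ) + 2) := by
          apply mul_le_mul_of_nonneg_right this (by positivity)
      _ = ε / 2 := by
          field_simp
  -- pointwise limsup bound
  have h4 : ∀ x, limsup (fun n => g n x) atTop ≤
      ENNReal.ofReal ((descSlope h x + ε') ^ 2 / 4) := by
    intro x
    have hkey := eventually_key hL x hε' (L := L)
    have hev : ∀ᶠ n in atTop, g n x ≤ ENNReal.ofReal ((descSlope h x + ε') ^ 2 / 4) := by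
      filter_upwards [hu_tend.eventually hkey] with n hn using ENNReal.ofReal_le_ofReal hn
    exact limsup_le_of_le (by isBoundedDefault) hev
  -- Fatou (limsup version)
  have h3 : limsup (fun n => ∫⁻ x, g n x ∂ν) atTop ≤
      ∫⁻ x, limsup (fun n => g n x) atTop ∂ν := by
    apply limsup_lintegral_le (fun _ => ENNReal.ofReal ((L : ℝ) ^ 2 / 4))
      (fun n => ENNReal.measurable_ofReal.comp (hv_meas n))
      (fun n => ae_of_all _ fun x => ENNReal.ofReal_le_ofReal (hv_le n x))
    rw [lintegral_const, measure_univ, mul_one]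
    exact ENNReal.ofReal_ne_top
  -- integrability of the slope bound
  have hw_meas : Measurable fun x => (descSlope h x + ε') ^ 2 / 4 :=
    (((descSlope_measurable hL).add_const ε').pow_const 2).div_const 4
  have hw_nonneg : ∀ x, 0 ≤ (descSlope h x + ε') ^ 2 / 4 := fun x => by positivity
  have hw_le : ∀ x, (descSlope h x + ε') ^ 2 / 4 ≤ ((L : ℝ) + 1) ^ 2 / 4 := by
    intro x
    have h5 := descSlope_nonneg hL x
    have h6 := descSlope_le hL x
    have : descSlope h x + ε' ≤ (L : ℝ) + 1 := by linarith
    have habs : (descSlope h x + ε') ^ 2 ≤ ((L : ℝ) + 1) ^ 2 := by nlinarith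
    linarith
  have hw_int : Integrable (fun x => (descSlope h x + ε') ^ 2 / 4) ν :=
    ⟨hw_meas.aestronglyMeasurable, HasFiniteIntegral.of_bounded (C := ((L : ℝ) + 1) ^ 2 / 4)
      (ae_of_all _ fun x => by
        rw [Real.norm_eq_abs, abs_of_nonneg (hw_nonneg x)]; exact hw_le x)⟩
  have h5 : ∫⁻ x, ENNReal.ofReal ((descSlope h x + ε') ^ 2 / 4) ∂ν =
      ENNReal.ofReal (∫ x, (descSlope h x + ε') ^ 2 / 4 ∂ν) :=
    (ofReal_integral_eq_lintegral_ofReal hw_int (ae_of_all _ hw_nonneg)).symm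
  -- bound the integral of the slope bound
  have hs_meas : Measurable fun x => descSlope h x ^ 2 / 4 :=
    ((descSlope_measurable hL).pow_const 2).div_const 4
  have hs_int : Integrable (fun x => descSlope h x ^ 2 / 4) ν :=
    ⟨hs_meas.aestronglyMeasurable, HasFiniteIntegral.of_bounded (C := (L : ℝ) ^ 2 / 4)
      (ae_of_all _ fun x => by
        have h5 := descSlope_nonneg hL x
        have h6 := descSlope_le hL x
        rw [Real.norm_eq_abs, abs_of_nonneg (by positivity)]
        have : descSlope h x ^ 2 ≤ (L : ℝ) ^ 2 := by nlinarith
        linarith)⟩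
  have h6 : ∫ x, (descSlope h x + ε') ^ 2 / 4 ∂ν ≤ C + ε / 2 / 4 := by
    have hpt : ∀ x, (descSlope h x + ε') ^ 2 / 4 ≤ descSlope h x ^ 2 / 4 + (ε / 2) / 4 := by
      intro x
      have h5 := descSlope_nonneg hL x
      have h6 := descSlope_le hL x
      have hexp : (descSlope h x + ε') ^ 2 =
          descSlope h x ^ 2 + ε' * (2 * descSlope h x + ε') := by ring
      have hb : ε' * (2 * descSlope h x + ε') ≤ ε' * (2 * (L : ℝ) + 2) := by
        apply mul_le_mul_of_nonneg_left _ hε'.le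
        linarith
      have := le_trans hb hε'2
      nlinarith [this, hexp]
    calc ∫ x, (descSlope h x + ε') ^ 2 / 4 ∂ν
        ≤ ∫ x, (descSlope h x ^ 2 / 4 + (ε / 2) / 4) ∂ν := by
          apply integral_mono hw_int (hs_int.add (integrable_const _)) hpt
      _ = (∫ x, descSlope h x ^ 2 / 4 ∂ν) + (ε / 2) / 4 := by
          rw [integral_add hs_int (integrable_const _), integral_const]
          simp
      _ = C + ε / 2 / 4 := by
          rw [hCdef]
          congr 1
          rw [integral_div]
          ring
  -- combine everything
  have hchain : ENNReal.ofReal (C + ε / 2) ≤ ENNReal.ofReal (C + ε / 2 / 4) := by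
    calc ENNReal.ofReal (C + ε / 2)
        ≤ liminf (fun n => ∫⁻ x, g n x ∂ν) atTop := by
          apply le_liminf_of_le (by isBoundedDefault)
          apply Filter.Eventually.of_forall
          intro n
          rw [h1 n]
          exact ENNReal.ofReal_le_ofReal (hu_gt n).le
      _ ≤ limsup (fun n => ∫⁻ x, g n x ∂ν) atTop := liminf_le_limsup
      _ ≤ ∫⁻ x, limsup (fun n => g n x) atTop ∂ν := h3
      _ ≤ ∫⁻ x, ENNReal.ofReal ((descSlope h x + ε') ^ 2 / 4) ∂ν := lintegral_mono fun x => h4 x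
      _ = ENNReal.ofReal (∫ x, (descSlope h x + ε') ^ 2 / 4 ∂ν) := h5
      _ ≤ ENNReal.ofReal (C + ε / 2 / 4) := ENNReal.ofReal_le_ofReal h6
  rw [ENNReal.ofReal_le_ofReal_iff (by linarith)] at hchain
  linarith
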